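/- Let $\Delta_n \subset M_n(\mathbb{C})$ be the diagonal subalgebra, $E : M_n(\mathbb{C}) \to \Delta_n$ the trace-preserving conditional expectation (extracting the diagonal), and $U \in M_n(\mathbb{C})$ a unitary. Define $\lambda(\Delta_n, U\Delta_n U^*) = \sup\{ t \ge 0 : \mathrm{Ad}_U \circ E \circ \mathrm{Ad}_{U^*}(x) \ge t x \text{ for all positive } x \in \Delta_n \}$. Then $\lambda(\Delta_n, U\Delta_n U^*) = \min_{1 \le i \le n} h((U^*)_i)^{-1}$, where $(U^*)_i$ is the $i$-th column of $U^*$ and $h$ denotes the Hamming number (number of nonzero entries) of a vector in $\mathbb{C}^n$. -/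

import Mathlib

open Matrix
open scoped ComplexOrder

lemma pp_quadform {n : ℕ} (U : Matrix (Fin n) (Fin n) ℂ) (hU : Uᴴ * U = 1)
    (c z : Fin n → ℂ) :
    star (U *ᵥ z) ⬝ᵥ ((U * diagonal c * Uᴴ) *ᵥ (U *ᵥ z))
      = ∑ j, star (z j) * (c j * z j) := by
  have h1 : (U * diagonal c * Uᴴ) *ᵥ (U *ᵥ z) = U *ᵥ (diagonal c *ᵥ z) := by
    rw [mulVec_mulVec, mulVec_mulVec, mul_assoc, mul_assoc, hU, mul_one]
  rw [h1, star_mulVec, dotProduct_mulVec, vecMul_vecMul, hU, vecMul_one]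
  simp [dotProduct, mulVec_diagonal]

lemma pp_entry {n : ℕ} (U : Matrix (Fin n) (Fin n) ℂ) (d : Fin n → ℂ) (j : Fin n) :
    (Uᴴ * diagonal d * U) j j = ∑ k, star (U k j) * (d k * U k j) := by
  rw [Matrix.mul_assoc]
  simp [Matrix.mul_apply, Matrix.diagonal_apply, Matrix.conjTranspose_apply, ite_mul]

lemma pp_cs {n : ℕ} (a : Fin n → ℂ) (s : Finset (Fin n)) (hs : ∀ j ∉ s, a j = 0) :
    Complex.normSq (∑ j, a j) ≤ s.card * ∑ j, Complex.normSq (a j) := by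
  have hsum : ∑ j, a j = ∑ j ∈ s, a j :=
    (Finset.sum_subset (Finset.subset_univ s) (fun j _ hj => hs j hj)).symm
  have hsum2 : ∑ j, Complex.normSq (a j) = ∑ j ∈ s, Complex.normSq (a j) :=
    (Finset.sum_subset (Finset.subset_univ s) (fun j _ hj => by rw [hs j hj]; simp)).symm
  rw [hsum, hsum2, ← Complex.sq_norm]
  calc ‖∑ j ∈ s, a j‖ ^ 2 ≤ (∑ j ∈ s, ‖a j‖) ^ 2 := by
        have h := norm_sum_le s a
        have h0 : 0 ≤ ‖∑ j ∈ s, a j‖ := norm_nonneg _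
        nlinarith
    _ ≤ s.card * ∑ j ∈ s, ‖a j‖ ^ 2 := sq_sum_le_card_mul_sum_sq
    _ = s.card * ∑ j ∈ s, Complex.normSq (a j) := by simp [Complex.sq_norm]

lemma pp_mem {n : ℕ} (U : Matrix (Fin n) (Fin n) ℂ) (hU : Uᴴ * U = 1)
    (lam : ℝ) (hlam0 : 0 ≤ lam)
    (hlam : ∀ k : Fin n, lam * ((Finset.univ.filter (fun j => U k j ≠ 0)).card : ℝ) ≤ 1) :
    ∀ x : Matrix (Fin n) (Fin n) ℂ,
        (∃ d : Fin n → ℂ, x = Matrix.diagonal d) → x.PosSemidef →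
        (U * Matrix.diagonal (fun i => (Uᴴ * x * U) i i) * Uᴴ - lam • x).PosSemidef := by
  classical
  have hU' : U * Uᴴ = 1 := mul_eq_one_comm.mp hU
  rintro x ⟨d, rfl⟩ hpsd
  have hd : ∀ k, 0 ≤ d k := posSemidef_diagonal_iff.mp hpsd
  have hdre : ∀ k, d k = ((d k).re : ℂ) := by
    intro k
    have h := (Complex.le_def.mp (hd k)).2
    exact Complex.ext (by simp) (by simp [← h])
  have hrd0 : ∀ k, (0:ℝ) ≤ (d k).re := by
    intro k
    have h := (Complex.le_def.mp (hd k)).1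
    simpa using h
  have hc0 : ∀ j, (0:ℂ) ≤ (Uᴴ * diagonal d * U) j j := by
    intro j
    rw [pp_entry]
    refine Finset.sum_nonneg (fun k _ => ?_)
    rw [show star (U k j) * (d k * U k j) = star (U k j) * d k * U k j from by ring]
    exact star_left_conjugate_nonneg (hd k) _
  have hPpsd : (U * diagonal (fun j => (Uᴴ * diagonal d * U) j j) * Uᴴ).PosSemidef :=
    (Matrix.PosSemidef.diagonal hc0).mul_mul_conjTranspose_same U
  refine Matrix.PosSemidef.of_dotProduct_mulVec_nonneg ?_ ?_
  · have h2 : (lam • diagonal d).IsHermitian := by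
      show (lam • diagonal d)ᴴ = lam • diagonal d
      rw [Matrix.conjTranspose_smul, star_trivial, hpsd.1]
    exact hPpsd.1.sub h2
  · intro w
    have hw : w = U *ᵥ (Uᴴ *ᵥ w) := by rw [mulVec_mulVec, hU', one_mulVec]
    set z := Uᴴ *ᵥ w with hzdef
    rw [hw]
    rw [Matrix.sub_mulVec, dotProduct_sub, smul_mulVec, dotProduct_smul]
    rw [pp_quadform U hU, Complex.real_smul]
    have hdiagq : star (U *ᵥ z) ⬝ᵥ ((diagonal d) *ᵥ (U *ᵥ z))
        = ∑ k, star ((U *ᵥ z) k) * (d k * (U *ᵥ z) k) := by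
      simp [dotProduct, mulVec_diagonal]
    rw [hdiagq]
    have key1 : ∑ j, star (z j) * ((Uᴴ * diagonal d * U) j j * z j)
        = ((∑ k, (d k).re * ∑ j, Complex.normSq (U k j * z j) : ℝ) : ℂ) := by
      have step1 : ∑ j, star (z j) * ((Uᴴ * diagonal d * U) j j * z j)
          = ∑ j, ∑ k, star (z j) * (star (U k j) * (d k * U k j) * z j) := by
        refine Finset.sum_congr rfl (fun j _ => ?_)
        rw [pp_entry, Finset.sum_mul, Finset.mul_sum]
      rw [step1, Finset.sum_comm]
      push_cast
      refine Finset.sum_congr rfl (fun k _ => ?_)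
      rw [Finset.mul_sum]
      refine Finset.sum_congr rfl (fun j _ => ?_)
      rw [hdre k, Complex.normSq_eq_conj_mul_self, _root_.map_mul, Complex.ofReal_re]
      simp only [Complex.star_def]
      ring
    have key2 : ∑ k, star ((U *ᵥ z) k) * (d k * (U *ᵥ z) k)
        = ((∑ k, (d k).re * Complex.normSq ((U *ᵥ z) k) : ℝ) : ℂ) := by
      push_cast
      refine Finset.sum_congr rfl (fun k _ => ?_)
      rw [hdre k, Complex.normSq_eq_conj_mul_self, Complex.ofReal_re]
      simp only [Pi.star_apply, Complex.star_def]
      ring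
    rw [key1, key2, ← Complex.ofReal_mul, ← Complex.ofReal_sub, Complex.zero_le_real]
    rw [Finset.mul_sum, ← Finset.sum_sub_distrib]
    refine Finset.sum_nonneg (fun k _ => ?_)
    set T : ℝ := ∑ j, Complex.normSq (U k j * z j) with hT
    have hT0 : 0 ≤ T := Finset.sum_nonneg (fun j _ => Complex.normSq_nonneg _)
    set card : ℝ := ((Finset.univ.filter (fun j => U k j ≠ 0)).card : ℝ) with hcard
    have hcs : Complex.normSq ((U *ᵥ z) k) ≤ card * T := by
      have hsupp : ∀ j ∉ Finset.univ.filter (fun j => U k j ≠ 0), U k j * z j = 0 := by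
        intro j hj
        simp only [Finset.mem_filter, Finset.mem_univ, true_and, not_not] at hj
        rw [hj, zero_mul]
      have h := pp_cs (fun j => U k j * z j) _ hsupp
      have hwk : (U *ᵥ z) k = ∑ j, U k j * z j := by simp [mulVec, dotProduct]
      rw [hwk]
      exact h
    have h1 : lam * Complex.normSq ((U *ᵥ z) k) ≤ lam * (card * T) :=
      mul_le_mul_of_nonneg_left hcs hlam0
    have h3 : (lam * card) * T ≤ 1 * T := mul_le_mul_of_nonneg_right (hlam k) hT0
    have h5 : 0 ≤ (d k).re * (T - lam * Complex.normSq ((U *ᵥ z) k)) :=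
      mul_nonneg (hrd0 k) (by nlinarith)
    nlinarith [h5]

lemma pp_ub {n : ℕ} (U : Matrix (Fin n) (Fin n) ℂ) (hU : Uᴴ * U = 1) (t : ℝ)
    (hP : ∀ x : Matrix (Fin n) (Fin n) ℂ,
        (∃ d : Fin n → ℂ, x = Matrix.diagonal d) → x.PosSemidef →
        (U * Matrix.diagonal (fun i => (Uᴴ * x * U) i i) * Uᴴ - t • x).PosSemidef)
    (i : Fin n) :
    t ≤ ((Finset.univ.filter (fun j => U i j ≠ 0)).card : ℝ)⁻¹ := by
  classical
  set m : ℝ := ((Finset.univ.filter (fun j => U i j ≠ 0)).card : ℝ) with hm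
  have hmpos : 0 < m := by
    have hU' : U * Uᴴ = 1 := mul_eq_one_comm.mp hU
    rw [hm]
    norm_cast
    rw [Finset.card_pos, Finset.filter_nonempty_iff]
    by_contra h
    push_neg at h
    have h1 : (U * Uᴴ) i i = 1 := by rw [hU']; simp [Matrix.one_apply]
    rw [Matrix.mul_apply] at h1
    simp only [fun j => h j (Finset.mem_univ j)] at h1
    simp at h1
  set d : Fin n → ℂ := fun k => if k = i then 1 else 0 with hd
  have hx : (diagonal d).PosSemidef := by
    refine Matrix.PosSemidef.diagonal (fun k => ?_)
    rw [hd]; dsimp only; split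
    · exact zero_le_one
    · exact le_refl 0
  have hM := hP (diagonal d) ⟨d, rfl⟩ hx
  set z : Fin n → ℂ := fun j => if U i j = 0 then 0 else (U i j)⁻¹ with hz
  have hq := hM.dotProduct_mulVec_nonneg (U *ᵥ z)
  -- compute c
  have hc : ∀ j, (Uᴴ * diagonal d * U) j j = star (U i j) * U i j := by
    intro j
    rw [pp_entry]
    rw [hd]
    simp [Finset.sum_ite_eq', mul_ite]
  -- quadratic form of the first part
  have e1 : star (U *ᵥ z) ⬝ᵥ ((U * diagonal (fun j => (Uᴴ * diagonal d * U) j j) * Uᴴ) *ᵥ (U *ᵥ z))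
      = (m : ℂ) := by
    rw [pp_quadform U hU]
    have : ∀ j, star (z j) * ((Uᴴ * diagonal d * U) j j * z j)
        = if U i j = 0 then 0 else 1 := by
      intro j
      rw [hc j, hz]
      dsimp only
      split
      · simp
      · rename_i h
        rw [star_inv₀]
        have h' : (starRingEnd ℂ) (U i j) ≠ 0 := star_ne_zero.mpr h
        field_simp
        exact div_self (star_ne_zero.mpr h)
    simp only [this]
    rw [Finset.sum_ite, Finset.sum_const_zero, Finset.sum_const, zero_add]
    simp [hm]
  -- the value w i
  have hwi : (U *ᵥ z) i = (m : ℂ) := by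
    simp only [mulVec, dotProduct, hz]
    have : ∀ j, U i j * (if U i j = 0 then 0 else (U i j)⁻¹) = if U i j = 0 then 0 else 1 := by
      intro j; split
      · simp
      · rename_i h; field_simp
    simp only [this]
    rw [Finset.sum_ite, Finset.sum_const_zero, Finset.sum_const, zero_add]
    simp [hm]
  have e2 : star (U *ᵥ z) ⬝ᵥ ((diagonal d) *ᵥ (U *ᵥ z)) = (m : ℂ) * m := by
    simp only [dotProduct, mulVec_diagonal, hd]
    rw [Finset.sum_eq_single i]
    · rw [if_pos rfl, one_mul, Pi.star_apply, hwi, Complex.star_def, Complex.conj_ofReal]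
    · intro b _ hb; rw [if_neg hb]; ring
    · intro h; exact absurd (Finset.mem_univ i) h
  -- combine
  rw [Matrix.sub_mulVec, dotProduct_sub, smul_mulVec, dotProduct_smul] at hq
  rw [e1, e2, Complex.real_smul] at hq
  have hreal : ((m - t * (m * m) : ℝ) : ℂ) = (m : ℂ) - (t : ℂ) * ((m:ℂ) * m) := by push_cast; ring
  rw [← hreal] at hq
  rw [Complex.zero_le_real] at hq
  rw [← one_div, le_div_iff₀ hmpos]
  nlinarith

/-- The Pimsner–Popa constant of the pair of Masas `(Δₙ, UΔₙU*)` in `Mₙ(ℂ)` equals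
the minimum over `i` of the reciprocal of the Hamming number of the `i`-th column
of `U*`. -/
theorem stmt3 {n : ℕ} (hn : 0 < n) (U : Matrix (Fin n) (Fin n) ℂ)
    (hU : Uᴴ * U = 1) :
    sSup {t : ℝ | 0 ≤ t ∧ ∀ x : Matrix (Fin n) (Fin n) ℂ,
        (∃ d : Fin n → ℂ, x = Matrix.diagonal d) → x.PosSemidef →
        (U * Matrix.diagonal (fun i => (Uᴴ * x * U) i i) * Uᴴ - t • x).PosSemidef}
      = ⨅ i : Fin n, ((Nat.card {j : Fin n // Uᴴ j i ≠ 0} : ℝ))⁻¹ := by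
  classical
  haveI : Nonempty (Fin n) := ⟨⟨0, hn⟩⟩
  have hcard : ∀ i : Fin n, Nat.card {j : Fin n // Uᴴ j i ≠ 0}
      = (Finset.univ.filter (fun j => U i j ≠ 0)).card := by
    intro i
    rw [Nat.card_congr (Equiv.subtypeEquivRight (q := fun j => U i j ≠ 0) (fun j => by
      simp [Matrix.conjTranspose_apply]))]
    rw [Nat.card_eq_fintype_card, Fintype.card_subtype]
  simp only [hcard]
  set f : Fin n → ℝ := fun i => (((Finset.univ.filter (fun j => U i j ≠ 0)).card : ℝ))⁻¹ with hf
  have hposn : ∀ i : Fin n, 0 < ((Finset.univ.filter (fun j => U i j ≠ 0)).card : ℝ) := by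
    intro i
    have hU' : U * Uᴴ = 1 := mul_eq_one_comm.mp hU
    norm_cast
    rw [Finset.card_pos, Finset.filter_nonempty_iff]
    by_contra h
    push_neg at h
    have h1 : (U * Uᴴ) i i = 1 := by rw [hU']; simp [Matrix.one_apply]
    rw [Matrix.mul_apply] at h1
    simp only [fun j => h j (Finset.mem_univ j)] at h1
    simp at h1
  set lam : ℝ := ⨅ i, f i with hlamdef
  have hbddb : BddBelow (Set.range f) := Finite.bddBelow_range f
  have hlam_le : ∀ i, lam ≤ f i := fun i => ciInf_le hbddb i
  have hlam0 : 0 ≤ lam := le_ciInf (fun i => by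
    rw [hf]
    positivity)
  have hub : ∀ t ∈ {t : ℝ | 0 ≤ t ∧ ∀ x : Matrix (Fin n) (Fin n) ℂ,
        (∃ d : Fin n → ℂ, x = Matrix.diagonal d) → x.PosSemidef →
        (U * Matrix.diagonal (fun i => (Uᴴ * x * U) i i) * Uᴴ - t • x).PosSemidef},
      t ≤ lam := by
    intro t ht
    exact le_ciInf (fun i => pp_ub U hU t ht.2 i)
  apply le_antisymm
  · exact Real.sSup_le hub hlam0
  · refine le_csSup ⟨lam, fun t ht => hub t ht⟩ ?_
    refine ⟨hlam0, pp_mem U hU lam hlam0 (fun k => ?_)⟩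
    have h1 := hlam_le k
    rw [hf] at h1
    have h2 : (0:ℝ) < ((Finset.univ.filter (fun j => U k j ≠ 0)).card : ℝ) := hposn k
    calc lam * ((Finset.univ.filter (fun j => U k j ≠ 0)).card : ℝ)
        ≤ (((Finset.univ.filter (fun j => U k j ≠ 0)).card : ℝ))⁻¹
            * ((Finset.univ.filter (fun j => U k j ≠ 0)).card : ℝ) :=
          mul_le_mul_of_nonneg_right h1 h2.le
      _ = 1 := inv_mul_cancel₀ h2.ne'
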